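/- Let X = LRᵀ be balanced with compact SVD X = UΣVᵀ, L = UΣ^{1/2}, R = VΣ^{1/2}. Then for any G ∈ ℝ^{m×n}, ‖GR‖_F² + ‖GᵀL‖_F² ≤ 2‖X‖₂·‖GVVᵀ + UUᵀG − UUᵀGVVᵀ‖_F². -/

import Mathlib

open Matrix

/-- Frobenius inner product of two real matrices. -/
def frobInner {m n : ℕ} (A B : Matrix (Fin m) (Fin n) ℝ) : ℝ := ∑ i, ∑ j, A i j * B i j

/-- Frobenius norm of a real matrix. -/
noncomputable def frobNorm {m n : ℕ} (A : Matrix (Fin m) (Fin n) ℝ) : ℝ :=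
  Real.sqrt (frobInner A A)

/-- Spectral norm (largest singular value) of a real matrix, as the operator norm
of the induced linear map between Euclidean spaces. -/
noncomputable def specNorm {m n : ℕ} (A : Matrix (Fin m) (Fin n) ℝ) : ℝ :=
  ‖LinearMap.toContinuousLinearMap (Matrix.toEuclideanLin A)‖

lemma frobInner_nonneg {m n : ℕ} (A : Matrix (Fin m) (Fin n) ℝ) : 0 ≤ frobInner A A := by
  apply Finset.sum_nonneg; intro i _; apply Finset.sum_nonneg; intro j _; exact mul_self_nonneg _

lemma frobNorm_sq {m n : ℕ} (A : Matrix (Fin m) (Fin n) ℝ) : frobNorm A ^ 2 = frobInner A A :=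
  Real.sq_sqrt (frobInner_nonneg A)

lemma frobInner_transpose {m n : ℕ} (A : Matrix (Fin m) (Fin n) ℝ) :
    frobInner Aᵀ Aᵀ = frobInner A A := by
  rw [frobInner, frobInner, Finset.sum_comm]
  rfl

lemma frobInner_eq_trace {m n : ℕ} (A B : Matrix (Fin m) (Fin n) ℝ) :
    frobInner A B = Matrix.trace (Aᵀ * B) := by
  simp [frobInner, Matrix.trace, Matrix.diag, Matrix.mul_apply, Matrix.transpose_apply]
  rw [Finset.sum_comm]

lemma frobInner_comm {m n : ℕ} (A B : Matrix (Fin m) (Fin n) ℝ) :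
    frobInner A B = frobInner B A := by
  simp [frobInner, mul_comm]

lemma frobInner_add_left {m n : ℕ} (A B C : Matrix (Fin m) (Fin n) ℝ) :
    frobInner (A + B) C = frobInner A C + frobInner B C := by
  simp [frobInner, add_mul, Finset.sum_add_distrib]

lemma frobInner_sub_left {m n : ℕ} (A B C : Matrix (Fin m) (Fin n) ℝ) :
    frobInner (A - B) C = frobInner A C - frobInner B C := by
  simp [frobInner, sub_mul, Finset.sum_sub_distrib]

lemma frobInner_add_right {m n : ℕ} (A B C : Matrix (Fin m) (Fin n) ℝ) :
    frobInner A (B + C) = frobInner A B + frobInner A C := by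
  rw [frobInner_comm, frobInner_add_left, frobInner_comm B, frobInner_comm C]

lemma frobInner_sub_right {m n : ℕ} (A B C : Matrix (Fin m) (Fin n) ℝ) :
    frobInner A (B - C) = frobInner A B - frobInner A C := by
  rw [frobInner_comm, frobInner_sub_left, frobInner_comm B, frobInner_comm C]

/-- **Upper bound for the balanced gradient via the Riemannian gradient.** For a
balanced factorization `X = L Rᵀ` with compact SVD `X = U Σ Vᵀ`, for every `G`,
`‖G R‖_F² + ‖Gᵀ L‖_F² ≤ 2 ‖X‖₂ ‖G V Vᵀ + U Uᵀ G - U Uᵀ G V Vᵀ‖_F²`. -/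
theorem balanced_gradient_upper_bound
    {m n k : ℕ} (U : Matrix (Fin m) (Fin k) ℝ) (V : Matrix (Fin n) (Fin k) ℝ)
    (σ : Fin k → ℝ)
    (hU : Uᵀ * U = 1) (hV : Vᵀ * V = 1) (hσ : ∀ i, 0 ≤ σ i)
    (X : Matrix (Fin m) (Fin n) ℝ) (hX : X = U * Matrix.diagonal σ * Vᵀ)
    (L : Matrix (Fin m) (Fin k) ℝ) (hL : L = U * Matrix.diagonal (fun i => Real.sqrt (σ i)))
    (R : Matrix (Fin n) (Fin k) ℝ) (hR : R = V * Matrix.diagonal (fun i => Real.sqrt (σ i)))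
    (G : Matrix (Fin m) (Fin n) ℝ) :
    frobNorm (G * R) ^ 2 + frobNorm (Gᵀ * L) ^ 2 ≤
      2 * specNorm X * frobNorm (G * V * Vᵀ + U * Uᵀ * G - U * Uᵀ * G * V * Vᵀ) ^ 2 := by
  have hU' : ∀ {p : ℕ} (M : Matrix (Fin k) (Fin p) ℝ), Uᵀ * (U * M) = M := by
    intro p M; rw [← Matrix.mul_assoc, hU, Matrix.one_mul]
  -- abbreviations
  set a := frobInner (G*V) (G*V) with ha_def
  set b := frobInner (Uᵀ*G) (Uᵀ*G) with hb_def
  set s := frobInner (Uᵀ*G*V) (Uᵀ*G*V) with hs_def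
  set c := specNorm X with hc_def
  have hc0 : 0 ≤ c := norm_nonneg _
  -- inner product identities
  have h1 : frobInner (G*V*Vᵀ) (G*V*Vᵀ) = a := by
    rw [frobInner_eq_trace, ha_def, frobInner_eq_trace]
    simp only [Matrix.transpose_mul, Matrix.transpose_transpose, Matrix.mul_assoc]
    rw [Matrix.trace_mul_comm V]
    simp only [Matrix.mul_assoc, hV, Matrix.mul_one]
  have h2 : frobInner (U*Uᵀ*G) (U*Uᵀ*G) = b := by
    rw [frobInner_eq_trace, hb_def, frobInner_eq_trace]
    simp only [Matrix.transpose_mul, Matrix.transpose_transpose, Matrix.mul_assoc, hU']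
  have h3 : frobInner (U*Uᵀ*G*V*Vᵀ) (U*Uᵀ*G*V*Vᵀ) = s := by
    rw [frobInner_eq_trace, hs_def, frobInner_eq_trace]
    simp only [Matrix.transpose_mul, Matrix.transpose_transpose, Matrix.mul_assoc, hU']
    rw [Matrix.trace_mul_comm V]
    simp only [Matrix.mul_assoc, hV, Matrix.mul_one]
  have h4 : frobInner (G*V*Vᵀ) (U*Uᵀ*G) = s := by
    rw [frobInner_eq_trace, hs_def, frobInner_eq_trace]
    simp only [Matrix.transpose_mul, Matrix.transpose_transpose, Matrix.mul_assoc, hU']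
    rw [Matrix.trace_mul_comm V]
    simp only [Matrix.mul_assoc, hV, Matrix.mul_one]
  have h5 : frobInner (G*V*Vᵀ) (U*Uᵀ*G*V*Vᵀ) = s := by
    rw [frobInner_eq_trace, hs_def, frobInner_eq_trace]
    simp only [Matrix.transpose_mul, Matrix.transpose_transpose, Matrix.mul_assoc, hU']
    rw [Matrix.trace_mul_comm V]
    simp only [Matrix.mul_assoc, hV, Matrix.mul_one]
  have h6 : frobInner (U*Uᵀ*G) (U*Uᵀ*G*V*Vᵀ) = s := by
    rw [frobInner_eq_trace, hs_def, frobInner_eq_trace]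
    simp only [Matrix.transpose_mul, Matrix.transpose_transpose, Matrix.mul_assoc, hU']
    simp only [← Matrix.mul_assoc]
    rw [Matrix.trace_mul_comm _ Vᵀ]
    simp only [Matrix.mul_assoc]
  -- s ≤ a
  have hsa : s ≤ a := by
    have e1 : frobInner (G*V) (U*(Uᵀ*(G*V))) = s := by
      rw [frobInner_eq_trace, hs_def, frobInner_eq_trace]
      simp only [Matrix.transpose_mul, Matrix.transpose_transpose, Matrix.mul_assoc]
    have e2 : frobInner (U*(Uᵀ*(G*V))) (U*(Uᵀ*(G*V))) = s := by
      rw [frobInner_eq_trace, hs_def, frobInner_eq_trace]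
      simp only [Matrix.transpose_mul, Matrix.transpose_transpose, Matrix.mul_assoc, hU']
    have h0 := frobInner_nonneg (G*V - U*(Uᵀ*(G*V)))
    rw [frobInner_sub_left, frobInner_sub_right, frobInner_sub_right,
        frobInner_comm (U*(Uᵀ*(G*V))) (G*V), e1, e2, ← ha_def] at h0
    linarith
  -- s ≤ b
  have hsb : s ≤ b := by
    have e1 : frobInner (Uᵀ*G) (Uᵀ*G*(V*Vᵀ)) = s := by
      rw [frobInner_eq_trace, hs_def, frobInner_eq_trace]
      simp only [Matrix.transpose_mul, Matrix.transpose_transpose, Matrix.mul_assoc, hU']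
      simp only [← Matrix.mul_assoc]
      rw [Matrix.trace_mul_comm _ Vᵀ]
      simp only [Matrix.mul_assoc]
    have e2 : frobInner (Uᵀ*G*(V*Vᵀ)) (Uᵀ*G*(V*Vᵀ)) = s := by
      rw [frobInner_eq_trace, hs_def, frobInner_eq_trace]
      simp only [Matrix.transpose_mul, Matrix.transpose_transpose, Matrix.mul_assoc, hU']
      rw [Matrix.trace_mul_comm V]
      simp only [Matrix.mul_assoc, hV, Matrix.mul_one]
    have h0 := frobInner_nonneg (Uᵀ*G - Uᵀ*G*(V*Vᵀ))
    rw [frobInner_sub_left, frobInner_sub_right, frobInner_sub_right,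
        frobInner_comm (Uᵀ*G*(V*Vᵀ)) (Uᵀ*G), e1, e2, ← hb_def] at h0
    linarith
  -- tangent norm
  have h4' : frobInner (U*Uᵀ*G) (G*V*Vᵀ) = s := by rw [frobInner_comm]; exact h4
  have h5' : frobInner (U*Uᵀ*G*V*Vᵀ) (G*V*Vᵀ) = s := by rw [frobInner_comm]; exact h5
  have h6' : frobInner (U*Uᵀ*G*V*Vᵀ) (U*Uᵀ*G) = s := by rw [frobInner_comm]; exact h6
  have hT : frobInner (G * V * Vᵀ + U * Uᵀ * G - U * Uᵀ * G * V * Vᵀ)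
      (G * V * Vᵀ + U * Uᵀ * G - U * Uᵀ * G * V * Vᵀ) = a + b - s := by
    simp only [frobInner_sub_left, frobInner_sub_right, frobInner_add_left,
      frobInner_add_right, h1, h2, h3, h4, h4', h5, h5', h6, h6']
    ring
  -- σ j ≤ c
  have hσle : ∀ j, σ j ≤ c := by
    intro j
    set f := LinearMap.toContinuousLinearMap (Matrix.toEuclideanLin X) with hf
    set v : EuclideanSpace ℝ (Fin n) := (WithLp.equiv 2 (Fin n → ℝ)).symm (fun i => V i j) with hv
    have hVj : ∑ i, V i j * V i j = 1 := by
      have := congrFun (congrFun hV j) j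
      simpa [Matrix.mul_apply, Matrix.one_apply] using this
    have hUj : ∑ i, U i j * U i j = 1 := by
      have := congrFun (congrFun hU j) j
      simpa [Matrix.mul_apply, Matrix.one_apply] using this
    have hnv : ‖v‖ = 1 := by
      rw [EuclideanSpace.norm_eq]
      simp only [hv, WithLp.equiv_symm_apply, WithLp.ofLp_toLp, PiLp.toLp_apply, Real.norm_eq_abs, sq_abs]
      rw [show ∑ i, (V i j)^2 = 1 by simpa [sq] using hVj]
      exact Real.sqrt_one
    have hXV : X * V = U * Matrix.diagonal σ := by
      rw [hX, Matrix.mul_assoc, hV, Matrix.mul_one]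
    have hmv : X *ᵥ (fun i => V i j) = fun i => σ j * U i j := by
      funext i
      have : (X * V) i j = (U * Matrix.diagonal σ) i j := by rw [hXV]
      rw [Matrix.mul_apply, Matrix.mul_diagonal] at this
      simpa [Matrix.mulVec, dotProduct, mul_comm] using this
    have hfv : f v = (WithLp.equiv 2 (Fin m → ℝ)).symm (fun i => σ j * U i j) := by
      rw [hf, hv]
      simp only [LinearMap.coe_toContinuousLinearMap',
        WithLp.equiv_symm_apply, Matrix.toEuclideanLin_apply_piLp_toLp, hmv]
    have hnfv : ‖f v‖ = σ j := by
      rw [hfv, EuclideanSpace.norm_eq]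
      simp only [WithLp.equiv_symm_apply, WithLp.ofLp_toLp, PiLp.toLp_apply, Real.norm_eq_abs, sq_abs]
      rw [show ∑ i, (σ j * U i j)^2 = σ j ^ 2 * ∑ i, (U i j)^2 by
            rw [Finset.mul_sum]; exact Finset.sum_congr rfl fun i _ => by ring,
          show ∑ i, (U i j)^2 = 1 by simpa [sq] using hUj, mul_one]
      exact Real.sqrt_sq (hσ j)
    calc σ j = ‖f v‖ := hnfv.symm
      _ ≤ ‖f‖ * ‖v‖ := f.le_opNorm v
      _ = c := by rw [hnv, mul_one, hc_def, specNorm, hf]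
  -- entrywise bounds
  have hGRle : frobInner (G*R) (G*R) ≤ c * a := by
    have hGR : ∀ i j', (G*R) i j' = (G*V) i j' * Real.sqrt (σ j') := by
      intro i j'
      rw [hR, ← Matrix.mul_assoc, Matrix.mul_diagonal]
    rw [ha_def, frobInner, frobInner, Finset.mul_sum]
    apply Finset.sum_le_sum
    intro i _
    rw [Finset.mul_sum]
    apply Finset.sum_le_sum
    intro j' _
    rw [hGR i j']
    have h' : (G*V) i j' * Real.sqrt (σ j') * ((G*V) i j' * Real.sqrt (σ j'))
        = (Real.sqrt (σ j') * Real.sqrt (σ j')) * ((G*V) i j' * (G*V) i j') := by ring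
    rw [h', Real.mul_self_sqrt (hσ j')]
    exact mul_le_mul_of_nonneg_right (hσle j') (mul_self_nonneg _)
  have hGLle : frobInner (Gᵀ*L) (Gᵀ*L) ≤ c * b := by
    have hGL : ∀ i j', (Gᵀ*L) i j' = (Gᵀ*U) i j' * Real.sqrt (σ j') := by
      intro i j'
      rw [hL, ← Matrix.mul_assoc, Matrix.mul_diagonal]
    have hbU : b = frobInner (Gᵀ*U) (Gᵀ*U) := by
      have hGU : Gᵀ*U = (Uᵀ*G)ᵀ := by rw [Matrix.transpose_mul, Matrix.transpose_transpose]
      rw [hb_def, hGU, frobInner_transpose]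
    rw [hbU, frobInner, frobInner, Finset.mul_sum]
    apply Finset.sum_le_sum
    intro i _
    rw [Finset.mul_sum]
    apply Finset.sum_le_sum
    intro j' _
    rw [hGL i j']
    have h' : (Gᵀ*U) i j' * Real.sqrt (σ j') * ((Gᵀ*U) i j' * Real.sqrt (σ j'))
        = (Real.sqrt (σ j') * Real.sqrt (σ j')) * ((Gᵀ*U) i j' * (Gᵀ*U) i j') := by ring
    rw [h', Real.mul_self_sqrt (hσ j')]
    exact mul_le_mul_of_nonneg_right (hσle j') (mul_self_nonneg _)
  -- combine
  rw [frobNorm_sq, frobNorm_sq, frobNorm_sq, hT]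
  have : c * a + c * b ≤ 2 * c * (a + b - s) := by nlinarith
  linarith
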